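/- Let n ≥ 4 and let t be a positive integer with ln n ≤ t ≤ √n. Fix x,y ∈ {0,1}^n, i ∈ [1..n] and d ∈ [−t..t] with i + d ≥ 1. Let i' be the minimum index with i ≤ i' ≤ n and i' + d ≤ n such that Δ_H(x_{[i..i']}, y_{[i..i']+d}) ≥ 3t; if no such i' exists set i' = ∞, and otherwise let H = {j ∈ [i..i'] : x_j ≠ y_{j+d}}. Let S be the random subset of [0..n] obtained by including each row of [1..n] independently with probability (ln n)/t and always including row 0, and let B(i,d) be the event that i' < ∞ and H ∩ S = ∅. Then Pr[B(i,d)] ≤ (1 − (ln n)/t)^{3t} < 1/(3n(2t+1)). -/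

import Mathlib

/-!
Statement 10 (Claim: bad sampling event).  Strings `x, y ∈ {0,1}^n` are modelled as
functions `ℤ → Bool` on positions `1..n`.  The random set `S ⊆ [0..n]` is modelled by
a point `ω` of the product Bernoulli(`ln n / t`) space `Fin n → Bool` (coordinate `k`
decides whether row `k+1` is included), row `0` being always included.
-/

namespace Stmt10

open MeasureTheory

/-- Bernoulli measure on `Bool` with parameter `p` (a probability measure when
`0 ≤ p ≤ 1`). -/
noncomputable def bern (p : ℝ) : Measure Bool :=
  ENNReal.ofReal p • Measure.dirac true + ENNReal.ofReal (1 - p) • Measure.dirac false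

/-- Product measure: each of the `n` rows is sampled independently with probability `p`. -/
noncomputable def sampleMeasure (n : ℕ) (p : ℝ) : Measure (Fin n → Bool) :=
  Measure.pi fun _ => bern p

/-- The sampled set of rows `S ⊆ [0..n]`: row `0` together with the rows `k+1`
for which `ω k` is true. -/
def rowsOf (n : ℕ) (ω : Fin n → Bool) : Set ℤ :=
  insert 0 {j : ℤ | ∃ k : Fin n, ω k = true ∧ j = (k : ℕ) + 1}

/-- Hamming distance between `x_{[a..b]}` and `y_{[a..b]+d}`. -/
noncomputable def hamOn (x y : ℤ → Bool) (d a b : ℤ) : ℕ :=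
  ((Finset.Icc a b).filter fun j => x j ≠ y (j + d)).card

instance bern_fin (p : ℝ) : IsFiniteMeasure (bern p) := by
  constructor
  simp [bern]

lemma bern_false (p : ℝ) : bern p ({false} : Set Bool) = ENNReal.ofReal (1 - p) := by
  simp [bern, Measure.dirac_apply]

lemma bern_univ (p : ℝ) (h0 : 0 ≤ p) (h1 : p ≤ 1) : bern p (Set.univ : Set Bool) = 1 := by
  simp [bern]
  rw [← ENNReal.ofReal_add h0 (by linarith)]
  norm_num

theorem stmt10 (n t : ℕ) (hn : 4 ≤ n) (ht : 1 ≤ t)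
    (hlog : Real.log n ≤ (t : ℝ)) (hsqrt : (t : ℝ) ≤ Real.sqrt n)
    (x y : ℤ → Bool) (i d : ℤ)
    (hi : 1 ≤ i) (hin : i ≤ (n : ℤ))
    (hd1 : -(t : ℤ) ≤ d) (hd2 : d ≤ (t : ℤ)) (hid : 1 ≤ i + d) :
    sampleMeasure n (Real.log n / t)
        {ω | ∃ i' : ℤ,
          (i ≤ i' ∧ i' ≤ (n : ℤ) ∧ i' + d ≤ (n : ℤ) ∧ 3 * t ≤ hamOn x y d i i') ∧
          (∀ r : ℤ, (i ≤ r ∧ r ≤ (n : ℤ) ∧ r + d ≤ (n : ℤ) ∧ 3 * t ≤ hamOn x y d i r) →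
            i' ≤ r) ∧
          ∀ j, i ≤ j → j ≤ i' → x j ≠ y (j + d) → j ∉ rowsOf n ω}
      ≤ ENNReal.ofReal ((1 - Real.log n / t) ^ (3 * t)) ∧
    (1 - Real.log n / t) ^ (3 * t) < 1 / (3 * (n : ℝ) * (2 * (t : ℝ) + 1)) := by
  classical
  set p : ℝ := Real.log n / t with hp
  have htR : (0 : ℝ) < t := by exact_mod_cast ht
  have hnR : (1 : ℝ) ≤ n := by exact_mod_cast (by omega : 1 ≤ n)
  have hp0 : 0 ≤ p := div_nonneg (Real.log_nonneg hnR) htR.le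
  have hp1 : p ≤ 1 := (div_le_one htR).2 hlog
  have h1p : 0 ≤ 1 - p := by linarith
  -- analytic part
  have hlogpos : 0 < Real.log n := Real.log_pos (by exact_mod_cast (by omega : 1 < n))
  have hsqn : Real.sqrt n ≤ (n : ℝ) / 2 := by
    rw [show (n : ℝ) / 2 = Real.sqrt (((n:ℝ)/2)^2) by
      rw [Real.sqrt_sq (by positivity)]]
    apply Real.sqrt_le_sqrt
    have h4n : (4:ℝ) ≤ n := by exact_mod_cast hn
    nlinarith [mul_nonneg (by linarith : (0:ℝ) ≤ (n:ℝ)) (by linarith : (0:ℝ) ≤ (n:ℝ) - 4)]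
  have hanalytic : (1 - p) ^ (3 * t) < 1 / (3 * (n : ℝ) * (2 * (t : ℝ) + 1)) := by
    have hnn : (4:ℝ) ≤ n := by exact_mod_cast hn
    have h1 : (1 - p) ^ (3 * t) ≤ Real.exp (-p) ^ (3 * t) := by
      apply pow_le_pow_left₀ h1p
      linarith [Real.add_one_le_exp (-p)]
    have h2 : Real.exp (-p) ^ (3 * t) = Real.exp (-(3 * Real.log n)) := by
      rw [← Real.exp_nat_mul]
      congr 1
      rw [hp]; push_cast
      field_simp
    have h3 : Real.exp (-(3 * Real.log n)) = 1 / (n : ℝ) ^ 3 := by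
      rw [Real.exp_neg, show (3 : ℝ) * Real.log n = Real.log ((n:ℝ)^3) by
        rw [Real.log_pow]; push_cast; ring]
      rw [Real.exp_log (by positivity)]
      rw [inv_eq_one_div]
    have h4 : 1 / (n : ℝ) ^ 3 < 1 / (3 * (n : ℝ) * (2 * (t : ℝ) + 1)) := by
      apply one_div_lt_one_div_of_lt (by positivity)
      have htn : (t : ℝ) ≤ (n : ℝ) / 2 := hsqrt.trans hsqn
      nlinarith [mul_nonneg (by linarith : (0:ℝ) ≤ (n:ℝ))
          (mul_nonneg (by linarith : (0:ℝ) ≤ (n:ℝ)-4) (by linarith : (0:ℝ) ≤ (n:ℝ)+1)),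
        mul_nonneg (by positivity : (0:ℝ) ≤ 3*(n:ℝ)) (by linarith : (0:ℝ) ≤ (n:ℝ)/2 - t)]
    calc (1 - p) ^ (3 * t) ≤ Real.exp (-p) ^ (3*t) := h1
      _ = 1 / (n:ℝ)^3 := by rw [h2, h3]
      _ < _ := h4
  refine ⟨?_, hanalytic⟩
  -- measure part
  by_cases hex : ∃ r : ℤ, i ≤ r ∧ r ≤ (n : ℤ) ∧ r + d ≤ (n : ℤ) ∧ 3 * t ≤ hamOn x y d i r
  · obtain ⟨i₀, hP₀, hmin₀⟩ := Int.exists_least_of_bdd ⟨i, fun z hz => hz.1⟩ hex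
    set H₀ : Finset ℤ := (Finset.Icc i i₀).filter (fun j => x j ≠ y (j + d)) with hH₀
    have hcard : 3 * t ≤ H₀.card := hP₀.2.2.2
    have hnpos : 0 < n := by omega
    set f : ℤ → Fin n := fun j => ⟨(j - 1).toNat % n, Nat.mod_lt _ hnpos⟩ with hf
    have hbound : ∀ j ∈ H₀, 1 ≤ j ∧ j ≤ (n : ℤ) := by
      intro j hj
      simp only [hH₀, Finset.mem_filter, Finset.mem_Icc] at hj
      exact ⟨hi.trans hj.1.1, hj.1.2.trans hP₀.2.1⟩
    have hinj : Set.InjOn f ↑H₀ := by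
      intro a ha b hb hab
      have h1 := hbound a ha; have h2 := hbound b hb
      have h3 : (a - 1).toNat % n = (b - 1).toNat % n := congrArg Fin.val hab
      rw [Nat.mod_eq_of_lt (by omega), Nat.mod_eq_of_lt (by omega)] at h3
      omega
    set K : Finset (Fin n) := H₀.image f with hK
    have hKcard : 3 * t ≤ K.card := by
      rw [hK, Finset.card_image_of_injOn hinj]; exact hcard
    set cyl : Set (Fin n → Bool) :=
      Set.univ.pi (fun k => if k ∈ K then ({false} : Set Bool) else Set.univ) with hcyl
    have hsub : {ω | ∃ i' : ℤ,
          (i ≤ i' ∧ i' ≤ (n : ℤ) ∧ i' + d ≤ (n : ℤ) ∧ 3 * t ≤ hamOn x y d i i') ∧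
          (∀ r : ℤ, (i ≤ r ∧ r ≤ (n : ℤ) ∧ r + d ≤ (n : ℤ) ∧ 3 * t ≤ hamOn x y d i r) →
            i' ≤ r) ∧
          ∀ j, i ≤ j → j ≤ i' → x j ≠ y (j + d) → j ∉ rowsOf n ω} ⊆ cyl := by
      rintro ω ⟨i', h1, h2, h3⟩
      have hieq : i' = i₀ := le_antisymm (h2 i₀ hP₀) (hmin₀ i' h1)
      subst hieq
      intro k _
      simp only
      by_cases hk : k ∈ K
      · rw [if_pos hk]
        obtain ⟨j, hj, hjk⟩ := Finset.mem_image.1 hk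
        have hb := hbound j hj
        simp only [hH₀, Finset.mem_filter, Finset.mem_Icc] at hj
        have hnot := h3 j hj.1.1 hj.1.2 hj.2
        simp only [rowsOf, Set.mem_insert_iff, Set.mem_setOf_eq, not_or, not_exists] at hnot
        have hkval : ((k : ℕ) : ℤ) + 1 = j := by
          have hv : (k : ℕ) = (j - 1).toNat % n := by rw [← hjk]
          rw [hv, Nat.mod_eq_of_lt (by omega)]; omega
        simp only [Set.mem_singleton_iff]
        cases hωk : ω k
        · rfl
        · exact absurd ⟨hωk, hkval.symm⟩ (hnot.2 k)
      · rw [if_neg hk]; trivial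
    calc sampleMeasure n p _ ≤ sampleMeasure n p cyl := measure_mono hsub
      _ = ∏ k : Fin n, bern p (if k ∈ K then ({false} : Set Bool) else Set.univ) := by
          rw [hcyl, sampleMeasure, Measure.pi_pi]
      _ = ∏ k : Fin n, (if k ∈ K then ENNReal.ofReal (1 - p) else 1) := by
          apply Finset.prod_congr rfl
          intro k _
          by_cases hk : k ∈ K
          · rw [if_pos hk, if_pos hk, bern_false]
          · rw [if_neg hk, if_neg hk, bern_univ p hp0 hp1]
      _ = ENNReal.ofReal (1 - p) ^ K.card := by
          rw [Finset.prod_ite_mem, Finset.univ_inter, Finset.prod_const]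
      _ ≤ ENNReal.ofReal (1 - p) ^ (3 * t) := by
          apply pow_le_pow_of_le_one zero_le _ hKcard
          exact ENNReal.ofReal_le_one.2 (by linarith)
      _ = ENNReal.ofReal ((1 - p) ^ (3 * t)) := (ENNReal.ofReal_pow h1p _).symm
  · convert (zero_le (a := ENNReal.ofReal ((1 - p) ^ (3 * t))))
    rw [← measure_empty (μ := sampleMeasure n p)]
    congr 1
    ext ω
    simp only [Set.mem_setOf_eq, Set.mem_empty_iff_false, iff_false, not_exists]
    intro i' hi'
    exact absurd ⟨i', hi'.1⟩ hex

end Stmt10
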